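/- Let Ω be a Cantor group and T : Ω → Ω a minimal translation. Then the set P of periodic sampling functions, i.e., the set of f ∈ C(Ω,ℝ) for which there exists p ∈ ℕ, p ≥ 1, with f(T^pω) = f(ω) for every ω ∈ Ω, is dense in C(Ω,ℝ) with respect to the supremum norm. -/

import Mathlib

/-- For a Cantor group `Ω` and a minimal translation `T ω = ω + α`,
the set of periodic sampling functions, i.e. those `f ∈ C(Ω,ℝ)` for which there
is `p ≥ 1` with `f(T^p ω) = f(ω)` for all `ω` (equivalently `f(ω + p • α) = f(ω)`),
is dense in `C(Ω,ℝ)` (with the supremum norm topology). -/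
theorem statement16
    (Ω : Type*) [TopologicalSpace Ω] [AddCommGroup Ω] [IsTopologicalAddGroup Ω]
    [CompactSpace Ω] [TotallyDisconnectedSpace Ω] [PerfectSpace Ω] [T2Space Ω]
    (T : Ω → Ω) (α : Ω) (hT : ∀ ω, T ω = ω + α)
    (hMin : ∀ ω : Ω, Dense {ω' : Ω | ∃ n : ℤ, ω' = ω + n • α}) :
    Dense {f : C(Ω, ℝ) | ∃ p : ℕ, 1 ≤ p ∧ ∀ ω : Ω, f (ω + p • α) = f ω} := by
  rw [Metric.dense_iff]
  intro f r hr
  letI : UniformSpace Ω := IsTopologicalAddGroup.rightUniformSpace Ω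
  haveI : IsUniformAddGroup Ω := isUniformAddGroup_of_addCommGroup
  have hf : UniformContinuous (f : Ω → ℝ) :=
    CompactSpace.uniformContinuous_of_continuous f.continuous
  have hmem : {p : Ω × Ω | dist (f p.1) (f p.2) < r / 2} ∈ uniformity Ω :=
    hf (Metric.dist_mem_uniformity (half_pos hr))
  rw [uniformity_eq_comap_nhds_zero Ω, Filter.mem_comap] at hmem
  obtain ⟨U, hU, hUsub⟩ := hmem
  obtain ⟨U', hU'subU, hU'open, h0U'⟩ := mem_nhds_iff.mp hU
  obtain ⟨W, hWclopen, hW0, hWsub⟩ :=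
    compact_exists_isClopen_in_isOpen hU'open h0U'
  obtain ⟨H, hH⟩ :=
    IsTopologicalAddGroup.exist_openAddSubgroup_sub_clopen_nhds_of_zero hWclopen hW0
  -- the quotient
  set Q := Ω ⧸ H.toAddSubgroup
  haveI : Finite Q := AddSubgroup.quotient_finite_of_isOpen H.toAddSubgroup H.isOpen
  haveI : Nonempty Q := ⟨(0 : Q)⟩
  set q : Ω → Q := QuotientAddGroup.mk
  have hq : Continuous q := continuous_quot_mk
  -- key fact: representative differs by an element of H
  have hrep : ∀ ω : Ω, (q ω).out - ω ∈ H.toAddSubgroup := by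
    intro ω
    refine (QuotientAddGroup.eq_zero_iff _).mp ?_
    rw [QuotientAddGroup.mk_sub, QuotientAddGroup.out_eq', sub_self]
  -- the periodic approximation
  have hcont : Continuous fun ω : Ω => f (q ω).out :=
    (continuous_of_discreteTopology (f := fun x : Q => f x.out)).comp hq
  refine ⟨⟨fun ω => f (q ω).out, hcont⟩, ?_, ?_⟩
  · -- distance < r
    rw [Metric.mem_ball, ContinuousMap.dist_lt_iff hr]
    intro ω
    have hd : dist (f ω) (f (q ω).out) < r / 2 := by
      have hmem : ((q ω).out : Ω) - ω ∈ U := hU'subU (hWsub (hH (hrep ω)))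
      exact hUsub (show ((ω, (q ω).out) : Ω × Ω) ∈ _ from hmem)
    simp only [ContinuousMap.coe_mk, dist_comm]
    calc dist (f ω) (f (q ω).out) < r / 2 := hd
      _ < r := by linarith
  · -- periodicity with p = Nat.card Q
    refine ⟨Nat.card Q, Nat.one_le_iff_ne_zero.mpr (Nat.card_pos).ne', fun ω => ?_⟩
    have : q (ω + (Nat.card Q) • α) = q ω := by
      have h0 : (Nat.card Q) • (q α) = 0 := card_nsmul_eq_zero'
      simp only [q, QuotientAddGroup.mk_add, QuotientAddGroup.mk_nsmul] at *
      rw [h0, add_zero]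
    simp only [ContinuousMap.coe_mk, this]
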